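/- Let A be an N×N real symmetric Toeplitz matrix with zero diagonal and iid entries of mean 0, variance 1, and finite higher moments. For every k ≥ 1, limsup_{N→∞} N^{−(k+1)} E[Trace(A^{2k})] ≤ (2k−1)!!, i.e., the limiting 2k-th spectral moment is at most the 2k-th moment of the standard Gaussian. -/

import Mathlib

open Finset Nat


/-- The set of perfect matchings of a finite set `s` of naturals, represented as
sets of ordered pairs `(a,b)` with `a < b`. -/
def matchSet (s : Finset ℕ) : Finset (Finset (ℕ × ℕ)) :=
  (s ×ˢ s).powerset.filter
    (fun P => (∀ q ∈ P, q.1 < q.2) ∧ ∀ x ∈ s, #{q ∈ P | q.1 = x ∨ q.2 = x} = 1)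

theorem card_matchSet_le (s : Finset ℕ) : (matchSet s).card ≤ (s.card - 1)‼ := by
  suffices H : ∀ m (s : Finset ℕ), s.card = m → (matchSet s).card ≤ (m - 1)‼ by
    simpa using H s.card s rfl
  intro m
  induction m using Nat.strong_induction_on with
  | _ m IH =>
  intro s hm
  rcases Nat.eq_zero_or_pos m with hm0 | hmpos
  · subst hm0
    have hs : s = ∅ := Finset.card_eq_zero.mp hm
    subst hs
    have : matchSet ∅ ⊆ {∅} := by
      intro P hP
      simp only [matchSet, mem_filter, mem_powerset] at hP
      simp only [mem_singleton]
      have : P ⊆ ∅ := by simpa using hP.1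
      exact Finset.subset_empty.mp this
    calc (matchSet ∅).card ≤ 1 := by simpa using Finset.card_le_card this
    _ = (0-1)‼ := rfl
  · -- s nonempty, let a be its minimum
    have hsne : s.Nonempty := Finset.card_pos.mp (hm ▸ hmpos)
    set a := s.min' hsne with ha
    have haS : a ∈ s := s.min'_mem hsne
    -- main subset claim
    have hsub : matchSet s ⊆ (s.erase a).biUnion
        (fun c => (matchSet ((s.erase a).erase c)).image (insert (a, c))) := by
      intro P hP
      simp only [matchSet, mem_filter, mem_powerset] at hP
      obtain ⟨hPsub, hlt, huniq⟩ := hP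
      -- the unique pair containing a
      obtain ⟨q, hq⟩ := Finset.card_eq_one.mp (huniq a haS)
      have hqP : q ∈ P ∧ (q.1 = a ∨ q.2 = a) := by
        have : q ∈ {q ∈ P | q.1 = a ∨ q.2 = a} := hq ▸ Finset.mem_singleton_self q
        simpa using this
      have hq1 : q.1 = a := by
        rcases hqP.2 with h | h
        · exact h
        · exfalso
          have h1 : q.1 ∈ s := (Finset.mem_product.mp (hPsub hqP.1)).1
          have := s.min'_le q.1 h1
          have := hlt q hqP.1
          omega
      set c := q.2 with hc
      have hcs : c ∈ s := (Finset.mem_product.mp (hPsub hqP.1)).2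
      have hac : a < c := by have := hlt q hqP.1; omega
      have hql : q = (a, c) := by rw [← hq1, hc]
      have hcea : c ∈ s.erase a := by
        rw [Finset.mem_erase]; exact ⟨by omega, hcs⟩
      refine Finset.mem_biUnion.mpr ⟨c, hcea, ?_⟩
      refine Finset.mem_image.mpr ⟨P.erase (a, c), ?_, ?_⟩
      · -- P.erase (a,c) is a matching of (s.erase a).erase c
        simp only [matchSet, mem_filter, mem_powerset]
        -- any pair in P.erase (a,c) avoids a and c
        have hkey : ∀ q' ∈ P.erase (a, c), q'.1 ≠ a ∧ q'.2 ≠ a ∧ q'.1 ≠ c ∧ q'.2 ≠ c := by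
          intro q' hq'
          rw [Finset.mem_erase] at hq'
          obtain ⟨hne, hq'P⟩ := hq'
          constructor
          · intro h
            apply hne
            have : q' ∈ {q ∈ P | q.1 = a ∨ q.2 = a} := by
              simp only [mem_filter]; exact ⟨hq'P, Or.inl h⟩
            rw [hq] at this
            rw [Finset.mem_singleton.mp this, hql]
          constructor
          · intro h
            apply hne
            have : q' ∈ {q ∈ P | q.1 = a ∨ q.2 = a} := by
              simp only [mem_filter]; exact ⟨hq'P, Or.inr h⟩
            rw [hq] at this
            rw [Finset.mem_singleton.mp this, hql]
          · -- pairs containing c : unique, and (a,c) contains c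
            have huc := huniq c hcs
            obtain ⟨q'', hq''⟩ := Finset.card_eq_one.mp huc
            have hacin : (a, c) ∈ {q ∈ P | q.1 = c ∨ q.2 = c} := by
              simp only [mem_filter]
              exact ⟨hql ▸ hqP.1, by simp⟩
            rw [hq''] at hacin
            have hacq'' := Finset.mem_singleton.mp hacin
            constructor
            · intro h
              apply hne
              have : q' ∈ {q ∈ P | q.1 = c ∨ q.2 = c} := by
                simp only [mem_filter]; exact ⟨hq'P, Or.inl h⟩
              rw [hq''] at this
              rw [Finset.mem_singleton.mp this, ← hacq'']
            · intro h
              apply hne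
              have : q' ∈ {q ∈ P | q.1 = c ∨ q.2 = c} := by
                simp only [mem_filter]; exact ⟨hq'P, Or.inr h⟩
              rw [hq''] at this
              rw [Finset.mem_singleton.mp this, ← hacq'']
        refine ⟨?_, ?_, ?_⟩
        · intro q' hq'
          have h1 := hkey q' hq'
          have h2 := hPsub (Finset.mem_of_mem_erase hq')
          rw [Finset.mem_product] at h2
          rw [Finset.mem_product, Finset.mem_erase, Finset.mem_erase,
            Finset.mem_erase, Finset.mem_erase]
          exact ⟨⟨h1.2.2.1, h1.1, h2.1⟩, h1.2.2.2, h1.2.1, h2.2⟩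
        · intro q' hq'
          exact hlt q' (Finset.mem_of_mem_erase hq')
        · intro x hx
          rw [Finset.mem_erase, Finset.mem_erase] at hx
          obtain ⟨hxc, hxa, hxs⟩ := hx
          have : {q' ∈ P.erase (a,c) | q'.1 = x ∨ q'.2 = x} =
              {q' ∈ P | q'.1 = x ∨ q'.2 = x} := by
            ext q'
            simp only [mem_filter, Finset.mem_erase]
            constructor
            · rintro ⟨⟨_, h1⟩, h2⟩; exact ⟨h1, h2⟩
            · rintro ⟨h1, h2⟩
              refine ⟨⟨?_, h1⟩, h2⟩
              rintro rfl
              simp only at h2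
              rcases h2 with h | h
              · exact hxa h.symm
              · exact hxc h.symm
          rw [this]
          exact huniq x hxs
      · -- inserting the pair back gives P
        rw [Finset.insert_erase (hql ▸ hqP.1)]
    -- now count
    calc (matchSet s).card
        ≤ ∑ c ∈ s.erase a, ((matchSet ((s.erase a).erase c)).image (insert (a, c))).card :=
          le_trans (Finset.card_le_card hsub) (Finset.card_biUnion_le)
      _ ≤ ∑ c ∈ s.erase a, (m - 2 - 1)‼ := by
          apply Finset.sum_le_sum
          intro c hc
          refine le_trans (Finset.card_image_le) ?_
          have hcard : ((s.erase a).erase c).card = m - 2 := by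
            have h1 := Finset.card_erase_of_mem hc
            have h2 := Finset.card_erase_of_mem haS
            omega
          exact IH (m-2) (by omega) _ hcard
      _ = (m - 1) * (m - 2 - 1)‼ := by
          rw [Finset.sum_const, smul_eq_mul, Finset.card_erase_of_mem haS, hm]
      _ ≤ (m - 1)‼ := by
          rcases Nat.lt_or_ge m 2 with h | h
          · have h1 : m = 1 := by omega
            subst h1; simp
          · obtain ⟨m', rfl⟩ : ∃ m', m = m' + 2 := ⟨m - 2, by omega⟩
            have : m' + 2 - 1 = m' + 1 := by omega
            rw [this, Nat.doubleFactorial_add_one]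
            simp

section Walks
variable {n N : ℕ} [NeZero n]

/-- successive distance along the cyclic walk -/
def dst (f : Fin n → Fin N) (j : Fin n) : ℕ := Nat.dist (f j : ℕ) (f (j+1) : ℕ)

/-- signed step -/
def stp (f : Fin n → Fin N) (j : Fin n) : ℤ := ((f (j+1) : ℕ) : ℤ) - ((f j : ℕ) : ℤ)

/-- multiplicity of a distance value -/
def mult (f : Fin n → Fin N) (d : ℕ) : ℕ := (univ.filter (fun j => dst f j = d)).card

def Pairy (f : Fin n → Fin N) : Prop := ∀ j, dst f j ≠ 0 ∧ mult f (dst f j) = 2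

def Goody (f : Fin n → Fin N) : Prop := ∀ j, dst f j ≠ 0 ∧ 2 ≤ mult f (dst f j)

instance (f : Fin n → Fin N) : Decidable (Pairy f) := by unfold Pairy; infer_instance
instance (f : Fin n → Fin N) : Decidable (Goody f) := by unfold Goody; infer_instance

lemma natAbs_stp (f : Fin n → Fin N) (j : Fin n) : (stp f j).natAbs = dst f j := by
  rw [stp, dst, Nat.dist]; omega

lemma sum_stp (f : Fin n → Fin N) : ∑ j, stp f j = 0 := by
  unfold stp
  rw [Finset.sum_sub_distrib]
  have : ∑ x : Fin n, ((f (x+1) : ℕ) : ℤ) = ∑ x : Fin n, ((f x : ℕ) : ℤ) :=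
    Fintype.sum_equiv (Equiv.addRight (1 : Fin n)) _ _ (fun x => rfl)
  rw [this, sub_self]

/-- the partner: the other element of the fiber (for `Pairy` walks) -/
def ptnr (f : Fin n → Fin N) (j : Fin n) : Fin n :=
  if h : ((univ.filter (fun j' => dst f j' = dst f j)).erase j).Nonempty
  then ((univ.filter (fun j' => dst f j' = dst f j)).erase j).min' h else j

/-- minimum of the fiber of j -/
def fmin (f : Fin n → Fin N) (j : Fin n) : Fin n :=
  (univ.filter (fun j' => dst f j' = dst f j)).min' ⟨j, by simp⟩

/-- set of fiber-minima ("first occurrences") -/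
def Ffst (f : Fin n → Fin N) : Finset (Fin n) :=
  univ.filter (fun j => ∀ j', dst f j' = dst f j → j ≤ j')

lemma fmin_dst (f : Fin n → Fin N) (j : Fin n) : dst f (fmin f j) = dst f j := by
  have := Finset.min'_mem (univ.filter (fun j' => dst f j' = dst f j)) ⟨j, by simp⟩
  simpa [fmin] using this

lemma fmin_le (f : Fin n → Fin N) {j j' : Fin n} (h : dst f j' = dst f j) : fmin f j ≤ j' := by
  apply Finset.min'_le
  simpa using h

lemma fmin_mem_Ffst (f : Fin n → Fin N) (j : Fin n) : fmin f j ∈ Ffst f := by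
  rw [Ffst, mem_filter]
  refine ⟨mem_univ _, fun j' h => ?_⟩
  rw [fmin_dst] at h
  exact fmin_le f h

lemma mem_Ffst_iff_fmin {f : Fin n → Fin N} {j : Fin n} : j ∈ Ffst f ↔ fmin f j = j := by
  constructor
  · intro hj
    rw [Ffst, mem_filter] at hj
    have h1 : fmin f j ≤ j := fmin_le f rfl
    have h2 : j ≤ fmin f j := hj.2 _ (fmin_dst f j)
    exact le_antisymm h1 h2
  · intro h
    rw [← h]; exact fmin_mem_Ffst f j

lemma card_Ffst (f : Fin n → Fin N) : (Ffst f).card = (univ.image (dst f)).card := by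
  apply Finset.card_bij (fun j _ => dst f j)
  · intro j _; exact mem_image_of_mem _ (mem_univ j)
  · intro j1 h1 j2 h2 he
    rw [Ffst, mem_filter] at h1 h2
    exact le_antisymm (h1.2 _ he.symm) (h2.2 _ he)
  · intro d hd
    obtain ⟨j, _, rfl⟩ := mem_image.mp hd
    exact ⟨fmin f j, fmin_mem_Ffst f j, fmin_dst f j⟩

lemma sum_mult (f : Fin n → Fin N) : ∑ d ∈ univ.image (dst f), mult f d = n := by
  have := Finset.card_eq_sum_card_image (dst f) univ
  simp only [Finset.card_univ, Fintype.card_fin] at this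
  simpa [mult] using this.symm

/-- fiber structure for `Pairy` walks -/
lemma ptnr_spec {f : Fin n → Fin N} (hP : Pairy f) (j : Fin n) :
    ptnr f j ≠ j ∧ dst f (ptnr f j) = dst f j ∧
      ∀ j', dst f j' = dst f j → j' = j ∨ j' = ptnr f j := by
  have hc : (univ.filter (fun j' => dst f j' = dst f j)).card = 2 := (hP j).2
  obtain ⟨a, c, hac, hset⟩ := Finset.card_eq_two.mp hc
  have hjmem : j ∈ univ.filter (fun j' => dst f j' = dst f j) := by simp
  rw [hset] at hjmem
  simp only [mem_insert, mem_singleton] at hjmem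
  have hone : (univ.filter (fun j' => dst f j' = dst f j)).erase j
      = {if j = a then c else a} := by
    ext x
    rw [Finset.mem_erase, hset]
    simp only [mem_insert, mem_singleton]
    rcases hjmem with rfl | rfl
    · simp only [if_pos rfl]
      constructor
      · rintro ⟨hx, rfl | rfl⟩
        · exact absurd rfl hx
        · rfl
      · rintro rfl
        exact ⟨Ne.symm hac, Or.inr rfl⟩
    · have hja : j ≠ a := by rintro rfl; exact hac rfl
      rw [if_neg hja]
      constructor
      · rintro ⟨hx, rfl | rfl⟩
        · rfl
        · exact absurd rfl hx
      · rintro rfl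
        exact ⟨hac, Or.inl rfl⟩
  have hne : ((univ.filter (fun j' => dst f j' = dst f j)).erase j).Nonempty := by
    rw [hone]; exact ⟨_, mem_singleton_self _⟩
  have hptnr : ptnr f j = if j = a then c else a := by
    rw [ptnr, dif_pos hne]
    have hmem := Finset.min'_mem _ hne
    have hmem2 : ((univ.filter (fun j' => dst f j' = dst f j)).erase j).min' hne
        ∈ ({if j = a then c else a} : Finset (Fin n)) := by
      rw [← hone]; exact hmem
    exact Finset.mem_singleton.mp hmem2
  have homem : (if j = a then c else a) ∈ univ.filter (fun j' => dst f j' = dst f j) := by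
    rw [hset]
    split_ifs <;> simp
  refine ⟨?_, ?_, ?_⟩
  · rw [hptnr]
    rcases hjmem with rfl | rfl
    · rw [if_pos rfl]; exact Ne.symm hac
    · have hja : j ≠ a := by rintro rfl; exact hac rfl
      rw [if_neg hja]; exact hac
  · rw [hptnr]
    exact (mem_filter.mp homem).2
  · intro j' hj'
    have : j' ∈ univ.filter (fun j'' => dst f j'' = dst f j) := by simpa using hj'
    rw [hset] at this
    simp only [mem_insert, mem_singleton] at this
    rw [hptnr]
    rcases hjmem with rfl | rfl
    · rw [if_pos rfl]; tauto
    · have hja : j ≠ a := by rintro rfl; exact hac rfl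
      rw [if_neg hja]; tauto

lemma ptnr_ne {f : Fin n → Fin N} (hP : Pairy f) (j : Fin n) : ptnr f j ≠ j :=
  (ptnr_spec hP j).1

lemma ptnr_dst {f : Fin n → Fin N} (hP : Pairy f) (j : Fin n) :
    dst f (ptnr f j) = dst f j := (ptnr_spec hP j).2.1

lemma ptnr_uniq {f : Fin n → Fin N} (hP : Pairy f) {j j' : Fin n}
    (h : dst f j' = dst f j) : j' = j ∨ j' = ptnr f j := (ptnr_spec hP j).2.2 _ h

lemma ptnr_invol {f : Fin n → Fin N} (hP : Pairy f) (j : Fin n) :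
    ptnr f (ptnr f j) = j := by
  have h1 : dst f j = dst f (ptnr f j) := (ptnr_dst hP j).symm
  rcases ptnr_uniq hP h1 with h | h
  · exact absurd h.symm (ptnr_ne hP j)
  · exact h.symm

lemma mem_Ffst_iff_lt {f : Fin n → Fin N} (hP : Pairy f) {j : Fin n} :
    j ∈ Ffst f ↔ j < ptnr f j := by
  rw [Ffst, mem_filter]
  constructor
  · intro hj
    have := hj.2 _ (ptnr_dst hP j)
    exact lt_of_le_of_ne this (Ne.symm (ptnr_ne hP j))
  · intro h
    refine ⟨mem_univ _, fun j' hj' => ?_⟩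
    rcases ptnr_uniq hP hj' with rfl | rfl
    · exact le_refl _
    · exact le_of_lt h

lemma fmin_ptnr {f : Fin n → Fin N} (hP : Pairy f) {j : Fin n} (hj : j ∈ Ffst f) :
    fmin f (ptnr f j) = j := by
  have h1 : fmin f (ptnr f j) ≤ j := fmin_le f (ptnr_dst hP j).symm
  have h2 : dst f (fmin f (ptnr f j)) = dst f j := by
    rw [fmin_dst, ptnr_dst hP]
  rcases ptnr_uniq hP h2 with h | h
  · exact h
  · exfalso
    rw [mem_Ffst_iff_lt hP] at hj
    rw [h] at h1
    exact absurd (lt_of_lt_of_le hj h1) (lt_irrefl j)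

lemma card_Ffst_pairy {f : Fin n → Fin N} (hP : Pairy f) {k : ℕ} (hn : n = 2 * k) :
    (Ffst f).card = k := by
  have h1 := sum_mult f
  have h2 : ∑ d ∈ univ.image (dst f), mult f d = 2 * (univ.image (dst f)).card := by
    rw [Finset.sum_congr rfl (fun d hd => ?_), Finset.sum_const, smul_eq_mul, mul_comm]
    obtain ⟨j, _, rfl⟩ := mem_image.mp hd
    exact (hP j).2
  rw [card_Ffst]
  omega

lemma card_Ffst_goody {f : Fin n → Fin N} (hG : Goody f) {k : ℕ} (hn : n = 2 * k)
    {j₀ : Fin n} (h3 : 3 ≤ mult f (dst f j₀)) : (Ffst f).card ≤ k - 1 := by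
  have h1 := sum_mult f
  have hd₀ : dst f j₀ ∈ univ.image (dst f) := mem_image_of_mem _ (mem_univ j₀)
  rw [← Finset.add_sum_erase _ _ hd₀] at h1
  have h2 : 2 * ((univ.image (dst f)).erase (dst f j₀)).card ≤
      ∑ d ∈ (univ.image (dst f)).erase (dst f j₀), mult f d := by
    rw [mul_comm, ← smul_eq_mul, ← Finset.sum_const]
    apply Finset.sum_le_sum
    intro d hd
    obtain ⟨j, _, rfl⟩ := mem_image.mp (Finset.mem_of_mem_erase hd)
    exact (hG j).2
  have h4 : ((univ.image (dst f)).erase (dst f j₀)).card = (univ.image (dst f)).card - 1 :=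
    Finset.card_erase_of_mem hd₀
  have h5 : 1 ≤ (univ.image (dst f)).card := Finset.card_pos.mpr ⟨_, hd₀⟩
  rw [card_Ffst]
  omega

lemma stp_sign_cases {f : Fin n → Fin N} {j j' : Fin n} (h : dst f j' = dst f j) :
    stp f j' = stp f j ∨ stp f j' = - stp f j := by
  have h1 := natAbs_stp f j
  have h2 := natAbs_stp f j'
  rw [h] at h2
  omega

lemma eq_of_stp_eq {f g : Fin n → Fin N} (h0 : f 0 = g 0)
    (hs : ∀ j, stp f j = stp g j) : f = g := by
  have key : ∀ t (h : t < n), f ⟨t, h⟩ = g ⟨t, h⟩ := by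
    intro t
    induction t with
    | zero =>
      intro h
      have : (⟨0, h⟩ : Fin n) = 0 := by
        apply Fin.ext
        simp
      rw [this]; exact h0
    | succ t IH =>
      intro h
      have ht : t < n := by omega
      have hstep : (⟨t+1, h⟩ : Fin n) = ⟨t, ht⟩ + 1 := by
        have e1 : (1 : Fin n).val = 1 := by
          rw [Fin.val_one']
          exact Nat.mod_eq_of_lt (by omega)
        apply Fin.ext
        rw [Fin.add_def, e1]
        exact (Nat.mod_eq_of_lt h).symm
      have h1 : ((f (⟨t, ht⟩ + 1) : ℕ) : ℤ) = ((f ⟨t, ht⟩ : ℕ) : ℤ) + stp f ⟨t, ht⟩ := by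
        rw [stp]; ring
      have h2 : ((g (⟨t, ht⟩ + 1) : ℕ) : ℤ) = ((g ⟨t, ht⟩ : ℕ) : ℤ) + stp g ⟨t, ht⟩ := by
        rw [stp]; ring
      apply Fin.ext
      have hIH := IH ht
      have : ((f (⟨t, ht⟩ + 1) : ℕ) : ℤ) = ((g (⟨t, ht⟩ + 1) : ℕ) : ℤ) := by
        rw [h1, h2, hIH, hs]
      rw [hstep]
      exact_mod_cast this
  funext j
  have := key j.val j.isLt
  simpa using this

end Walks

section Enc
variable {n N : ℕ} [NeZero n]

def OppSgn (f : Fin n → Fin N) : Prop := ∀ j, stp f (ptnr f j) = - stp f j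

instance (f : Fin n → Fin N) : Decidable (OppSgn f) := by unfold OppSgn; infer_instance

def Pf (f : Fin n → Fin N) : Finset (ℕ × ℕ) :=
  ((univ : Finset (Fin n × Fin n)).filter
    (fun p => p.1 < p.2 ∧ dst f p.1 = dst f p.2)).image (fun p => ((p.1 : ℕ), (p.2 : ℕ)))

lemma mem_Pf_iff {f : Fin n → Fin N} (hP : Pairy f) {a c : Fin n} :
    ((a : ℕ), (c : ℕ)) ∈ Pf f ↔ a < c ∧ ptnr f a = c := by
  rw [Pf, mem_image]
  constructor
  · rintro ⟨p, hp, he⟩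
    rw [mem_filter] at hp
    rw [Prod.mk.injEq] at he
    have h1 : p.1 = a := Fin.val_injective he.1
    have h2 : p.2 = c := Fin.val_injective he.2
    rw [h1, h2] at hp
    refine ⟨hp.2.1, ?_⟩
    have := hp.2.2
    rcases ptnr_uniq hP this.symm with h | h
    · exact absurd (h ▸ hp.2.1) (lt_irrefl a)
    · exact h.symm
  · rintro ⟨hlt, rfl⟩
    exact ⟨(a, ptnr f a), by
      rw [mem_filter]
      exact ⟨mem_univ _, hlt, (ptnr_dst hP a).symm⟩, rfl⟩

lemma ptnr_eq_of_Pf {f g : Fin n → Fin N} (hPf : Pairy f) (hPg : Pairy g)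
    (h : Pf f = Pf g) (j : Fin n) : ptnr f j = ptnr g j := by
  rcases lt_trichotomy j (ptnr f j) with hlt | heq | hgt
  · have h1 := (mem_Pf_iff hPf).mpr ⟨hlt, rfl⟩
    rw [h] at h1
    exact (((mem_Pf_iff hPg).mp h1).2).symm
  · exact absurd heq.symm (ptnr_ne hPf j)
  · have h2 : (((ptnr f j : Fin n) : ℕ), (j : ℕ)) ∈ Pf f :=
      (mem_Pf_iff hPf).mpr ⟨hgt, ptnr_invol hPf j⟩
    rw [h] at h2
    have h3 := ((mem_Pf_iff hPg).mp h2).2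
    have h4 := congrArg (ptnr g) h3
    rw [ptnr_invol hPg] at h4
    exact h4

lemma Ffst_eq_of_ptnr {f g : Fin n → Fin N} (hPf : Pairy f) (hPg : Pairy g)
    (h : ∀ j, ptnr f j = ptnr g j) : Ffst f = Ffst g := by
  ext j
  rw [mem_Ffst_iff_lt hPf, mem_Ffst_iff_lt hPg, h]

lemma Pf_mem_matchSet {f : Fin n → Fin N} (hP : Pairy f) : Pf f ∈ matchSet (range n) := by
  rw [matchSet, mem_filter, mem_powerset]
  refine ⟨?_, ?_, ?_⟩
  · intro q hq
    obtain ⟨p, _, rfl⟩ := mem_image.mp hq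
    rw [Finset.mem_product]
    exact ⟨mem_range.mpr p.1.isLt, mem_range.mpr p.2.isLt⟩
  · intro q hq
    obtain ⟨p, hp, rfl⟩ := mem_image.mp hq
    exact (mem_filter.mp hp).2.1
  · intro x hx
    rw [mem_range] at hx
    set j : Fin n := ⟨x, hx⟩ with hj
    apply Finset.card_eq_one.mpr
    refine ⟨if j < ptnr f j then ((j:ℕ), ((ptnr f j : Fin n):ℕ))
      else (((ptnr f j : Fin n):ℕ), (j:ℕ)), ?_⟩
    ext q
    rw [mem_filter, mem_singleton]
    constructor
    · rintro ⟨hqPf, hq⟩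
      obtain ⟨p, hp, rfl⟩ := mem_image.mp hqPf
      rw [mem_filter] at hp
      obtain ⟨-, hplt, hpd⟩ := hp
      have hptnr : ptnr f p.1 = p.2 := by
        rcases ptnr_uniq hP hpd.symm with hh | hh
        · exact absurd (hh ▸ hplt) (lt_irrefl _)
        · exact hh.symm
      rcases hq with hq | hq
      · have hp1 : p.1 = j := Fin.val_injective hq
        rw [hp1] at hptnr hplt
        rw [if_pos (hptnr ▸ hplt)]
        rw [Prod.mk.injEq]
        exact ⟨hq, by rw [← hptnr]⟩
      · have hp2 : p.2 = j := Fin.val_injective hq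
        rw [hp2] at hptnr hplt
        have hinv : ptnr f j = p.1 := by rw [← hptnr, ptnr_invol hP]
        have hnlt : ¬ (j < ptnr f j) := by
          rw [hinv]; exact not_lt_of_gt hplt
        rw [if_neg hnlt, Prod.mk.injEq]
        exact ⟨by rw [hinv], hq⟩
    · intro hq
      subst hq
      split_ifs with hlt
      · refine ⟨(mem_Pf_iff hP).mpr ⟨hlt, rfl⟩, Or.inl rfl⟩
      · have hgt : ptnr f j < j := by
          rcases lt_trichotomy j (ptnr f j) with h1 | h1 | h1
          · exact absurd h1 hlt
          · exact absurd h1.symm (ptnr_ne hP j)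
          · exact h1
        refine ⟨(mem_Pf_iff hP).mpr ⟨hgt, ptnr_invol hP j⟩, Or.inr rfl⟩

/-- marker map recording, for each non-first position, its fiber minimum and relative sign -/
def cB (f : Fin n → Fin N) : Fin n → Option (Fin n × Bool) := fun j =>
  if j ∈ Ffst f then none else some (fmin f j, decide (stp f j = stp f (fmin f j)))

lemma Ffst_eq_of_cB {f g : Fin n → Fin N} (h : cB f = cB g) : Ffst f = Ffst g := by
  ext j
  have hj := congrFun h j
  rw [cB, cB] at hj
  by_cases hf : j ∈ Ffst f <;> by_cases hg : j ∈ Ffst g <;>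
    simp only [hf, hg, if_true, if_false, if_pos, if_neg] at hj ⊢ <;> simp_all

lemma stp_all_eq {f g : Fin n → Fin N} (hc : cB f = cB g)
    (hF : ∀ j ∈ Ffst f, stp f j = stp g j) : ∀ j, stp f j = stp g j := by
  intro j
  by_cases hj : j ∈ Ffst f
  · exact hF j hj
  · have hjg : j ∉ Ffst g := by rw [← Ffst_eq_of_cB hc]; exact hj
    have h1 := congrFun hc j
    rw [cB, cB, if_neg hj, if_neg hjg] at h1
    have h2 := Option.some.inj h1
    rw [Prod.mk.injEq] at h2
    obtain ⟨hfm, hb⟩ := h2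
    have hsf : stp f (fmin f j) = stp g (fmin f j) := hF _ (fmin_mem_Ffst f j)
    have haf : (stp f j).natAbs = (stp f (fmin f j)).natAbs := by
      rw [natAbs_stp, natAbs_stp, fmin_dst]
    have hag : (stp g j).natAbs = (stp g (fmin g j)).natAbs := by
      rw [natAbs_stp, natAbs_stp, fmin_dst]
    rw [← hfm] at hag
    by_cases hbb : stp f j = stp f (fmin f j)
    · have : decide (stp g j = stp g (fmin g j)) = true := by
        rw [← hb]; exact decide_eq_true hbb
      have hgg : stp g j = stp g (fmin g j) := of_decide_eq_true this
      rw [← hfm] at hgg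
      rw [hbb, hsf, ← hgg]
    · have : decide (stp g j = stp g (fmin g j)) = false := by
        rw [← hb]; exact decide_eq_false hbb
      have hgg : ¬ (stp g j = stp g (fmin g j)) := of_decide_eq_false this
      rw [← hfm] at hgg
      have e1 : stp f j = - stp f (fmin f j) := by omega
      have e2 : stp g j = - stp g (fmin f j) := by omega
      rw [e1, e2, hsf]

/-- recorded step values along a subset, listed in increasing order of position -/
def wOf (f : Fin n → Fin N) (s : Finset (Fin n)) (K : ℕ) : Fin K → ℤ :=
  fun t => if h : (t : ℕ) < (s.sort (· ≤ ·)).length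
    then stp f ((s.sort (· ≤ ·)).get ⟨t, h⟩) else 0

lemma wOf_spec {f g : Fin n → Fin N} {s : Finset (Fin n)} {K : ℕ}
    (hcard : s.card ≤ K) (hw : wOf f s K = wOf g s K) :
    ∀ j ∈ s, stp f j = stp g j := by
  intro j hj
  have hmem : j ∈ s.sort (· ≤ ·) := (Finset.mem_sort _).mpr hj
  have hlen : (s.sort (· ≤ ·)).length = s.card := Finset.length_sort _
  have hidx : (s.sort (· ≤ ·)).idxOf j < (s.sort (· ≤ ·)).length :=
    List.idxOf_lt_length_iff.mpr hmem
  have hKidx : (s.sort (· ≤ ·)).idxOf j < K := by omega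
  have := congrFun hw ⟨(s.sort (· ≤ ·)).idxOf j, hKidx⟩
  rw [wOf, wOf] at this
  simp only [dif_pos hidx] at this
  rwa [List.idxOf_get hidx] at this

/-- recorded successor values along a subset, listed in increasing order of position -/
def vOf (f : Fin n → Fin N) (s : Finset (Fin n)) (K : ℕ) : Fin K → Fin N :=
  fun t => if h : (t : ℕ) < (s.sort (· ≤ ·)).length
    then f ((s.sort (· ≤ ·)).get ⟨t, h⟩ + 1) else f 0

lemma vOf_spec {f g : Fin n → Fin N} {s : Finset (Fin n)} {K : ℕ}
    (hcard : s.card ≤ K) (hw : vOf f s K = vOf g s K) :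
    ∀ j ∈ s, f (j + 1) = g (j + 1) := by
  intro j hj
  have hmem : j ∈ s.sort (· ≤ ·) := (Finset.mem_sort _).mpr hj
  have hlen : (s.sort (· ≤ ·)).length = s.card := Finset.length_sort _
  have hidx : (s.sort (· ≤ ·)).idxOf j < (s.sort (· ≤ ·)).length :=
    List.idxOf_lt_length_iff.mpr hmem
  have hKidx : (s.sort (· ≤ ·)).idxOf j < K := by omega
  have := congrFun hw ⟨(s.sort (· ≤ ·)).idxOf j, hKidx⟩
  rw [vOf, vOf] at this
  simp only [dif_pos hidx] at this
  rwa [List.idxOf_get hidx] at this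

end Enc

section Counts
variable {n N k : ℕ} [NeZero n]

lemma stp_mem_Icc (f : Fin n → Fin N) (j : Fin n) :
    stp f j ∈ Finset.Icc (-(N:ℤ)) N := by
  rw [Finset.mem_Icc, stp]
  have h1 := (f (j+1)).isLt
  have h2 := (f j).isLt
  omega

lemma countB (hn : n = 2*k) :
    ((univ : Finset (Fin n → Fin N)).filter
      (fun f => Goody f ∧ ∃ j, 3 ≤ mult f (dst f j))).card
    ≤ (2*n+1)^n * (N * (2*N+1)^(k-1)) := by
  classical
  have hmain := Finset.card_le_card_of_injOn
    (f := fun f : Fin n → Fin N => (cB f, f 0, wOf f (Ffst f) (k-1)))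
    (s := (univ : Finset (Fin n → Fin N)).filter
      (fun f => Goody f ∧ ∃ j, 3 ≤ mult f (dst f j)))
    (t := (univ : Finset (Fin n → Option (Fin n × Bool))) ×ˢ
      ((univ : Finset (Fin N)) ×ˢ
        (Fintype.piFinset fun _ : Fin (k-1) => Finset.Icc (-(N:ℤ)) N)))
    ?_ ?_
  · have hcard1 : Fintype.card (Fin n → Option (Fin n × Bool)) = (2*n+1)^n := by
      have hopt : Fintype.card (Option (Fin n × Bool)) = 2*n+1 := by
        rw [Fintype.card_option, Fintype.card_prod, Fintype.card_fin, Fintype.card_bool]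
        omega
      rw [Fintype.card_fun, hopt, Fintype.card_fin]
    have hcard2 : (Finset.Icc (-(N:ℤ)) N).card = 2*N+1 := by
      rw [Int.card_Icc]
      omega
    calc _ ≤ _ := hmain
      _ = (2*n+1)^n * (N * (2*N+1)^(k-1)) := by
        rw [Finset.card_product, Finset.card_product, Fintype.card_piFinset,
          Finset.prod_const, hcard2]
        simp only [Finset.card_univ, hcard1, Fintype.card_fin]
  · intro f _
    rw [Finset.mem_coe, Finset.mem_product, Finset.mem_product]
    refine ⟨mem_univ _, mem_univ _, ?_⟩
    rw [Fintype.mem_piFinset]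
    intro t
    simp only [wOf]
    split_ifs with h
    · exact stp_mem_Icc f _
    · rw [Finset.mem_Icc]; omega
  · intro f hf g hg he
    simp only [Finset.mem_coe, mem_filter] at hf hg
    obtain ⟨-, hGf, jf, h3f⟩ := hf
    obtain ⟨-, hGg, -, -⟩ := hg
    rw [Prod.mk.injEq, Prod.mk.injEq] at he
    obtain ⟨hc, h0, hw⟩ := he
    have hFf : Ffst f = Ffst g := Ffst_eq_of_cB hc
    have hcard : (Ffst f).card ≤ k - 1 := card_Ffst_goody hGf hn h3f
    have hstF : ∀ j ∈ Ffst f, stp f j = stp g j := by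
      apply wOf_spec hcard
      rw [← hFf] at hw
      exact hw
    exact eq_of_stp_eq h0 (stp_all_eq hc hstF)

def Sset (f : Fin n → Fin N) : Finset (Fin n) :=
  (Ffst f).filter (fun j => stp f (ptnr f j) = stp f j)

def jzero (f : Fin n → Fin N) : Fin n :=
  if h : (Sset f).Nonempty then (Sset f).min' h else 0

lemma ptnr_not_mem_Ffst {f : Fin n → Fin N} (hP : Pairy f) {j : Fin n}
    (hj : j ∈ Ffst f) : ptnr f j ∉ Ffst f := by
  rw [mem_Ffst_iff_lt hP] at hj ⊢
  rw [ptnr_invol hP]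
  omega

lemma Sset_nonempty {f : Fin n → Fin N} (hP : Pairy f) (hO : ¬ OppSgn f) :
    (Sset f).Nonempty := by
  rw [OppSgn] at hO
  push_neg at hO
  obtain ⟨j, hj⟩ := hO
  have hsame : stp f (ptnr f j) = stp f j :=
    (stp_sign_cases (ptnr_dst hP j)).resolve_right hj
  have hfib : dst f (fmin f j) = dst f j := fmin_dst f j
  rcases ptnr_uniq hP hfib with hc | hc
  · exact ⟨j, by
      rw [Sset, mem_filter]
      exact ⟨mem_Ffst_iff_fmin.mpr hc, hsame⟩⟩
  · refine ⟨ptnr f j, ?_⟩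
    rw [Sset, mem_filter]
    refine ⟨hc ▸ fmin_mem_Ffst f j, ?_⟩
    rw [ptnr_invol hP, hsame]

lemma jzero_mem {f : Fin n → Fin N} (hP : Pairy f) (hO : ¬ OppSgn f) :
    jzero f ∈ Sset f := by
  rw [jzero, dif_pos (Sset_nonempty hP hO)]
  exact Finset.min'_mem _ _

lemma Sset_subset_Ffst (f : Fin n → Fin N) : Sset f ⊆ Ffst f := Finset.filter_subset _ _

lemma sum_Sset_stp {f : Fin n → Fin N} (hP : Pairy f) :
    ∑ j ∈ Sset f, stp f j = 0 := by
  have h0 := sum_stp f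
  have hsplit : (univ : Finset (Fin n)) = Ffst f ∪ (univ \ Ffst f) := by
    rw [Finset.union_sdiff_of_subset (Finset.subset_univ _)]
  have hdisj : Disjoint (Ffst f) (univ \ Ffst f) := Finset.disjoint_sdiff
  rw [hsplit, Finset.sum_union hdisj] at h0
  have hbij : ∑ j ∈ univ \ Ffst f, stp f j = ∑ j ∈ Ffst f, stp f (ptnr f j) := by
    apply Finset.sum_nbij' (i := fun j => ptnr f j) (j := fun j => ptnr f j)
    · intro j hj
      rw [Finset.mem_sdiff] at hj
      have hj2 : j ∉ Ffst f := hj.2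
      rw [mem_Ffst_iff_lt hP] at hj2 ⊢
      rw [ptnr_invol hP]
      rcases lt_trichotomy j (ptnr f j) with h | h | h
      · exact absurd h hj2
      · exact absurd h.symm (ptnr_ne hP j)
      · exact h
    · intro j hj
      rw [Finset.mem_sdiff]
      refine ⟨mem_univ _, ptnr_not_mem_Ffst hP hj⟩
    · intro j _; exact ptnr_invol hP j
    · intro j _; exact ptnr_invol hP j
    · intro j _; rw [ptnr_invol hP]
  rw [hbij, ← Finset.sum_add_distrib] at h0
  have hsplit2 : Ffst f = Sset f ∪ (Ffst f \ Sset f) := by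
    rw [Finset.union_sdiff_of_subset (Sset_subset_Ffst f)]
  rw [hsplit2, Finset.sum_union Finset.disjoint_sdiff] at h0
  have hz : ∑ j ∈ Ffst f \ Sset f, (stp f j + stp f (ptnr f j)) = 0 := by
    apply Finset.sum_eq_zero
    intro j hj
    rw [Finset.mem_sdiff, Sset, mem_filter] at hj
    have hne : ¬ stp f (ptnr f j) = stp f j := fun h => hj.2 ⟨hj.1, h⟩
    have := (stp_sign_cases (ptnr_dst hP j)).resolve_left hne
    omega
  rw [hz, add_zero] at h0
  have hS : ∑ j ∈ Sset f, (stp f j + stp f (ptnr f j)) = ∑ j ∈ Sset f, 2 * stp f j := by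
    apply Finset.sum_congr rfl
    intro j hj
    rw [Sset, mem_filter] at hj
    rw [hj.2]; ring
  rw [hS, ← Finset.mul_sum] at h0
  omega

lemma mem_Sset_iff_cB {f : Fin n → Fin N} (hP : Pairy f) {j : Fin n} :
    j ∈ Sset f ↔ j ∈ Ffst f ∧ ∃ j'', cB f j'' = some (j, true) := by
  constructor
  · intro hj
    rw [Sset, mem_filter] at hj
    refine ⟨hj.1, ptnr f j, ?_⟩
    rw [cB, if_neg (ptnr_not_mem_Ffst hP hj.1), fmin_ptnr hP hj.1]
    congr 1
    rw [Prod.mk.injEq]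
    exact ⟨rfl, decide_eq_true hj.2⟩
  · rintro ⟨hjF, j'', hj''⟩
    rw [cB] at hj''
    split_ifs at hj'' with h
    have h2 := Option.some.inj hj''
    rw [Prod.mk.injEq] at h2
    obtain ⟨hfm, hb⟩ := h2
    have hstp : stp f j'' = stp f (fmin f j'') := of_decide_eq_true hb
    have hdst : dst f j'' = dst f j := by
      rw [← hfm, ← fmin_dst f j'']
    have hne : j'' ≠ j := by
      rintro rfl
      exact h hjF
    rcases ptnr_uniq hP hdst with hc | hc
    · exact absurd hc hne
    · rw [Sset, mem_filter]
      refine ⟨hjF, ?_⟩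
      rw [← hc, hstp, hfm]

lemma Sset_eq_of_cB {f g : Fin n → Fin N} (hPf : Pairy f) (hPg : Pairy g)
    (hc : cB f = cB g) : Sset f = Sset g := by
  ext j
  rw [mem_Sset_iff_cB hPf, mem_Sset_iff_cB hPg, Ffst_eq_of_cB hc, hc]

lemma countC (hn : n = 2*k) (hk : 1 ≤ k) :
    ((univ : Finset (Fin n → Fin N)).filter
      (fun f => Pairy f ∧ ¬ OppSgn f)).card
    ≤ (2*n+1)^n * (n * (N * (2*N+1)^(k-1))) := by
  classical
  have hmain := Finset.card_le_card_of_injOn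
    (f := fun f : Fin n → Fin N => (cB f, jzero f, f 0, wOf f ((Ffst f).erase (jzero f)) (k-1)))
    (s := (univ : Finset (Fin n → Fin N)).filter (fun f => Pairy f ∧ ¬ OppSgn f))
    (t := (univ : Finset (Fin n → Option (Fin n × Bool))) ×ˢ
      ((univ : Finset (Fin n)) ×ˢ ((univ : Finset (Fin N)) ×ˢ
        (Fintype.piFinset fun _ : Fin (k-1) => Finset.Icc (-(N:ℤ)) N))))
    ?_ ?_
  · have hcard1 : Fintype.card (Fin n → Option (Fin n × Bool)) = (2*n+1)^n := by
      have hopt : Fintype.card (Option (Fin n × Bool)) = 2*n+1 := by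
        rw [Fintype.card_option, Fintype.card_prod, Fintype.card_fin, Fintype.card_bool]
        omega
      rw [Fintype.card_fun, hopt, Fintype.card_fin]
    have hcard2 : (Finset.Icc (-(N:ℤ)) N).card = 2*N+1 := by
      rw [Int.card_Icc]
      omega
    calc _ ≤ _ := hmain
      _ = (2*n+1)^n * (n * (N * (2*N+1)^(k-1))) := by
        rw [Finset.card_product, Finset.card_product, Finset.card_product,
          Fintype.card_piFinset, Finset.prod_const, hcard2]
        simp only [Finset.card_univ, hcard1, Fintype.card_fin]
  · intro f _
    rw [Finset.mem_coe, Finset.mem_product, Finset.mem_product, Finset.mem_product]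
    refine ⟨mem_univ _, mem_univ _, mem_univ _, ?_⟩
    rw [Fintype.mem_piFinset]
    intro t
    simp only [wOf]
    split_ifs with h
    · exact stp_mem_Icc f _
    · rw [Finset.mem_Icc]; omega
  · intro f hf g hg he
    simp only [Finset.mem_coe, mem_filter] at hf hg
    obtain ⟨-, hPf, hOf⟩ := hf
    obtain ⟨-, hPg, hOg⟩ := hg
    rw [Prod.mk.injEq, Prod.mk.injEq, Prod.mk.injEq] at he
    obtain ⟨hc, hj0, h0, hw⟩ := he
    have hFf : Ffst f = Ffst g := Ffst_eq_of_cB hc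
    have hSf : Sset f = Sset g := Sset_eq_of_cB hPf hPg hc
    have hj0S : jzero f ∈ Sset f := jzero_mem hPf hOf
    have hj0F : jzero f ∈ Ffst f := Sset_subset_Ffst f hj0S
    have hcardF : (Ffst f).card = k := card_Ffst_pairy hPf hn
    have hcard : ((Ffst f).erase (jzero f)).card ≤ k - 1 := by
      rw [Finset.card_erase_of_mem hj0F, hcardF]
    have hstE : ∀ j ∈ (Ffst f).erase (jzero f), stp f j = stp g j := by
      apply wOf_spec hcard
      rw [← hFf, ← hj0] at hw
      exact hw
    have hstj0 : stp f (jzero f) = stp g (jzero f) := by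
      have h1 := sum_Sset_stp hPf
      have h2 := sum_Sset_stp hPg
      rw [← hSf] at h2
      rw [← Finset.add_sum_erase _ _ hj0S] at h1
      have hj0Sg : jzero f ∈ Sset f := hj0S
      rw [← Finset.add_sum_erase _ _ hj0Sg] at h2
      have hrest : ∑ j ∈ (Sset f).erase (jzero f), stp f j
          = ∑ j ∈ (Sset f).erase (jzero f), stp g j := by
        apply Finset.sum_congr rfl
        intro j hj
        apply hstE
        rw [Finset.mem_erase] at hj ⊢
        exact ⟨hj.1, Sset_subset_Ffst f hj.2⟩
      omega
    have hstF : ∀ j ∈ Ffst f, stp f j = stp g j := by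
      intro j hj
      by_cases hje : j = jzero f
      · rw [hje]; exact hstj0
      · exact hstE j (Finset.mem_erase.mpr ⟨hje, hj⟩)
    exact eq_of_stp_eq h0 (stp_all_eq hc hstF)

end Counts

section CountA
variable {n N k : ℕ} [NeZero n]

lemma countA (hn : n = 2*k) :
    ((univ : Finset (Fin n → Fin N)).filter
      (fun f => Pairy f ∧ OppSgn f)).card
    ≤ (matchSet (range n)).card * (N * N^k) := by
  classical
  have hmain := Finset.card_le_card_of_injOn
    (f := fun f : Fin n → Fin N => (Pf f, f 0, vOf f (Ffst f) k))
    (s := (univ : Finset (Fin n → Fin N)).filter (fun f => Pairy f ∧ OppSgn f))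
    (t := (matchSet (range n)) ×ˢ
      ((univ : Finset (Fin N)) ×ˢ (univ : Finset (Fin k → Fin N))))
    ?_ ?_
  · calc _ ≤ _ := hmain
      _ = (matchSet (range n)).card * (N * N^k) := by
        rw [Finset.card_product, Finset.card_product]
        simp only [Finset.card_univ, Fintype.card_fin, Fintype.card_fun]
  · intro f hf
    rw [Finset.mem_coe, mem_filter] at hf
    rw [Finset.mem_coe, Finset.mem_product, Finset.mem_product]
    exact ⟨Pf_mem_matchSet hf.2.1, mem_univ _, mem_univ _⟩
  · intro f hf g hg he
    simp only [Finset.mem_coe, mem_filter] at hf hg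
    obtain ⟨-, hPf, hOf⟩ := hf
    obtain ⟨-, hPg, hOg⟩ := hg
    rw [Prod.mk.injEq, Prod.mk.injEq] at he
    obtain ⟨hPP, h0, hv⟩ := he
    have hptnr : ∀ j, ptnr f j = ptnr g j := ptnr_eq_of_Pf hPf hPg hPP
    have hFf : Ffst f = Ffst g := Ffst_eq_of_ptnr hPf hPg hptnr
    have hcardF : (Ffst f).card = k := card_Ffst_pairy hPf hn
    have hvals : ∀ j ∈ Ffst f, f (j + 1) = g (j + 1) := by
      apply vOf_spec (le_of_eq hcardF)
      rw [← hFf] at hv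
      exact hv
    -- sequential reconstruction
    have key : ∀ t, ∀ (h : t < n), f ⟨t, h⟩ = g ⟨t, h⟩ := by
      intro t
      induction t using Nat.strong_induction_on with
      | _ t IH =>
      intro h
      match t, h with
      | 0, h =>
        have h00 : (⟨0, h⟩ : Fin n) = 0 := by
          apply Fin.ext; simp
        rw [h00]; exact h0
      | (t+1), h =>
        have ht : t < n := by omega
        set j : Fin n := ⟨t, ht⟩ with hjdef
        have hstep : (⟨t+1, h⟩ : Fin n) = j + 1 := by
          have e1 : (1 : Fin n).val = 1 := by
            rw [Fin.val_one']
            exact Nat.mod_eq_of_lt (by omega)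
          apply Fin.ext
          rw [Fin.add_def, e1]
          exact (Nat.mod_eq_of_lt h).symm
        rw [hstep]
        by_cases hjF : j ∈ Ffst f
        · exact hvals j hjF
        · -- second occurrence : partner is earlier and a first occurrence
          have hlt : ptnr f j < j := by
            rw [mem_Ffst_iff_lt hPf] at hjF
            rcases lt_trichotomy j (ptnr f j) with h1 | h1 | h1
            · exact absurd h1 hjF
            · exact absurd h1.symm (ptnr_ne hPf j)
            · exact h1
          set j' : Fin n := ptnr f j with hj'def
          have hj'F : j' ∈ Ffst f := by
            rw [mem_Ffst_iff_lt hPf, hj'def, ptnr_invol hPf]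
            exact hlt
          -- opposite signs
          have hof : stp f j = - stp f j' := by
            have h1 := hOf j'
            rw [hj'def, ptnr_invol hPf] at h1
            exact h1
          have hog : stp g j = - stp g j' := by
            have h1 := hOg (ptnr g j)
            rw [ptnr_invol hPg, ← hptnr j, ← hj'def] at h1
            exact h1
          -- IH facts
          have hfj : f j = g j := IH t (by omega) ht
          have hj'lt : (j' : ℕ) < t := hlt
          have hfj' : f j' = g j' := by
            have := IH (j' : ℕ) (by omega) (by omega)
            have hcast : (⟨(j' : ℕ), by omega⟩ : Fin n) = j' := by
              apply Fin.ext; rfl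
            rwa [hcast] at this
          have hfj'1 : f (j' + 1) = g (j' + 1) := hvals j' hj'F
          -- conclude
          have hf1 : ((f (j+1) : ℕ) : ℤ) = ((f j : ℕ) : ℤ) + stp f j := by
            rw [stp]; ring
          have hg1 : ((g (j+1) : ℕ) : ℤ) = ((g j : ℕ) : ℤ) + stp g j := by
            rw [stp]; ring
          have hsf : stp f j' = ((f (j'+1) : ℕ) : ℤ) - ((f j' : ℕ) : ℤ) := rfl
          have hsg : stp g j' = ((g (j'+1) : ℕ) : ℤ) - ((g j' : ℕ) : ℤ) := rfl
          apply Fin.ext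
          have : ((f (j+1) : ℕ) : ℤ) = ((g (j+1) : ℕ) : ℤ) := by
            rw [hf1, hg1, hof, hog, hsf, hsg, hfj, hfj', hfj'1]
          exact_mod_cast this
    funext x
    have := key x.val x.isLt
    simpa using this

end CountA

open MeasureTheory ProbabilityTheory in

lemma indep_prod_integrable_integral {Ω : Type*} [MeasurableSpace Ω] {μ : Measure Ω}
    [IsProbabilityMeasure μ] {Y : ℕ → Ω → ℝ}
    (hind : iIndepFun Y μ) (hm : ∀ i, Measurable (Y i))
    (hint : ∀ i, Integrable (Y i) μ) (t : Finset ℕ) :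
    Integrable (∏ i ∈ t, Y i) μ ∧
      ∫ ω, (∏ i ∈ t, Y i) ω ∂μ = ∏ i ∈ t, ∫ ω, Y i ω ∂μ := by
  classical
  induction t using Finset.cons_induction with
  | empty =>
    constructor
    · rw [Finset.prod_empty]; exact integrable_const (1:ℝ)
    · simp
  | cons i t hi IH =>
    have hIndep : IndepFun (∏ j ∈ t, Y j) (Y i) μ :=
      iIndepFun.indepFun_finset_prod_of_notMem hind hm hi
    have hint1 : Integrable ((∏ j ∈ t, Y j) * Y i) μ :=
      hIndep.integrable_mul IH.1 (hint i)
    have heq : ∏ j ∈ Finset.cons i t hi, Y j = (∏ j ∈ t, Y j) * Y i := by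
      rw [Finset.prod_cons]; ring
    constructor
    · rw [heq]; exact hint1
    · rw [heq]
      have := hIndep.integral_mul_eq_mul_integral IH.1.aestronglyMeasurable (hint i).aestronglyMeasurable
      rw [Finset.prod_cons, this, IH.2]
      ring

section Expect
open MeasureTheory ProbabilityTheory

variable {Ω : Type*} [MeasurableSpace Ω] {μ : Measure Ω} [IsProbabilityMeasure μ]
variable {b : ℕ → Ω → ℝ}
variable {n N : ℕ} [NeZero n]

/-- expectation of the walk product when some distance vanishes -/
lemma walk_zero (hzero : b 0 = 0) (f : Fin n → Fin N) (hf : ∃ j, dst f j = 0) :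
    (fun ω => ∏ j, b (dst f j) ω) = (0 : Ω → ℝ) := by
  obtain ⟨j₀, hj₀⟩ := hf
  funext ω
  apply Finset.prod_eq_zero (Finset.mem_univ j₀)
  rw [hj₀, hzero]
  rfl

lemma walk_factor (hmeas : ∀ i, Measurable (b i))
    (hindep : iIndepFun (fun i => b (i+1)) μ)
    (hintq : ∀ i q : ℕ, Integrable (fun ω => (b (i+1) ω)^q) μ)
    (f : Fin n → Fin N) (hf : ∀ j, dst f j ≠ 0) :
    Integrable (fun ω => ∏ j, b (dst f j) ω) μ ∧
    (∫ ω, ∏ j, b (dst f j) ω ∂μ)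
      = ∏ d ∈ Finset.univ.image (dst f), (∫ ω, (b d ω)^(mult f d) ∂μ) := by
  classical
  set s : Finset ℕ := Finset.univ.image (dst f) with hs
  have hs1 : ∀ d ∈ s, d ≠ 0 := by
    intro d hd
    obtain ⟨j, -, rfl⟩ := Finset.mem_image.mp hd
    exact hf j
  set t : Finset ℕ := s.image (· - 1) with ht
  set Y : ℕ → Ω → ℝ := fun i ω => (b (i+1) ω)^(mult f (i+1)) with hY
  have hYind : iIndepFun Y μ := by
    apply iIndepFun.comp hindep (fun i (x : ℝ) => x ^ (mult f (i+1)))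
    intro i
    exact measurable_id.pow_const _
  have hYmeas : ∀ i, Measurable (Y i) := fun i => (hmeas (i+1)).pow_const _
  have hYint : ∀ i, Integrable (Y i) μ := fun i => hintq i _
  have hinj : ∀ x ∈ s, ∀ y ∈ s, x - 1 = y - 1 → x = y := by
    intro x hx y hy hxy
    have := hs1 x hx
    have := hs1 y hy
    omega
  have hti : ∀ i ∈ t, i + 1 ∈ s := by
    intro i hi
    obtain ⟨d, hd, rfl⟩ := Finset.mem_image.mp hi
    have := hs1 d hd
    have : d - 1 + 1 = d := by omega
    rwa [this]
  have hfun : (fun ω => ∏ j, b (dst f j) ω) = ∏ i ∈ t, Y i := by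
    funext ω
    rw [Finset.prod_apply]
    have h1 : ∏ j : Fin n, b (dst f j) ω = ∏ d ∈ s, (b d ω) ^ (mult f d) := by
      rw [hs]
      exact Finset.prod_comp (fun d => b d ω) (dst f)
    rw [h1, ht, Finset.prod_image hinj]
    apply Finset.prod_congr rfl
    intro d hd
    have hd1 : d - 1 + 1 = d := by have := hs1 d hd; omega
    rw [hY]
    simp only
    rw [hd1]
  obtain ⟨hI, hE⟩ := indep_prod_integrable_integral hYind hYmeas hYint t
  constructor
  · rw [hfun]; exact hI
  · rw [hfun, hE]
    rw [Finset.prod_image hinj]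
    apply Finset.prod_congr rfl
    intro d hd
    have hd1 : d - 1 + 1 = d := by have := hs1 d hd; omega
    rw [hY]
    simp only
    rw [hd1]

end Expect

section Trace

private lemma pow_apply_walk {N : ℕ} (A : Matrix (Fin N) (Fin N) ℝ) :
    ∀ (m : ℕ) (i j : Fin N), (A ^ (m+1)) i j =
      ∑ g : Fin m → Fin N,
        (∏ t : Fin m, A (Matrix.vecCons i g t.castSucc) (Matrix.vecCons i g t.succ))
          * A (Matrix.vecCons i g (Fin.last m)) j := by
  intro m
  induction m with
  | zero =>
    intro i j
    rw [pow_one]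
    rw [Fintype.sum_unique]
    simp [Matrix.vecCons]
  | succ m IH =>
    intro i j
    have h1 : A ^ (m + 1 + 1) = A * A ^ (m+1) := pow_succ' A (m+1)
    rw [h1, Matrix.mul_apply]
    simp_rw [IH, Finset.mul_sum]
    rw [← Finset.sum_product', Finset.univ_product_univ]
    apply Fintype.sum_equiv (Fin.consEquiv (fun _ : Fin (m+1) => Fin N))
    rintro ⟨x, g⟩
    show A i x * ((∏ t : Fin m, A (Matrix.vecCons x g t.castSucc) (Matrix.vecCons x g t.succ))
          * A (Matrix.vecCons x g (Fin.last m)) j) = _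
    have hc : (Fin.consEquiv (fun _ : Fin (m+1) => Fin N)) (x, g) = Matrix.vecCons x g := rfl
    rw [hc, Fin.prod_univ_succ]
    have e0 : ∀ (u : Fin (m+1)),
        (Matrix.vecCons i (Matrix.vecCons x g) (u.succ) : Fin N) = Matrix.vecCons x g u :=
      fun u => by simp
    have e1 : (Matrix.vecCons i (Matrix.vecCons x g) ((0 : Fin (m+1)).castSucc) : Fin N) = i := by
      simp
    have e5 : (Matrix.vecCons i (Matrix.vecCons x g) (Fin.last (m+1)) : Fin N)
        = Matrix.vecCons x g (Fin.last m) := by rw [← Fin.succ_last, e0]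
    rw [e5]
    have e2 : ∀ (t : Fin m), (Matrix.vecCons i (Matrix.vecCons x g) (t.succ.castSucc) : Fin N)
        = Matrix.vecCons x g t.castSucc := fun t => by
      rw [← Fin.succ_castSucc, e0]
    have e3 : ∀ (t : Fin m), (Matrix.vecCons i (Matrix.vecCons x g) (t.succ.succ) : Fin N)
        = Matrix.vecCons x g t.succ := fun t => by rw [e0]
    simp only [e1, e2, e3]
    have e4 : (Matrix.vecCons i (Matrix.vecCons x g) ((0:Fin (m+1)).succ) : Fin N)
        = Matrix.vecCons x g 0 := e0 0
    rw [e4]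
    simp only [Matrix.cons_val_zero]
    ring

theorem trace_pow_eq_sum_walks {N : ℕ} (A : Matrix (Fin N) (Fin N) ℝ) (m : ℕ) :
    (A ^ (m+1)).trace = ∑ f : Fin (m+1) → Fin N, ∏ j : Fin (m+1), A (f j) (f (j+1)) := by
  rw [Matrix.trace]
  have : ∀ i : Fin N, (A ^ (m+1)).diag i = (A ^ (m+1)) i i := fun i => rfl
  simp_rw [this, pow_apply_walk A m]
  rw [← Finset.sum_product', Finset.univ_product_univ]
  apply Fintype.sum_equiv (Fin.consEquiv (fun _ : Fin (m+1) => Fin N))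
  rintro ⟨i, g⟩
  have hc : (Fin.consEquiv (fun _ : Fin (m+1) => Fin N)) (i, g) = Matrix.vecCons i g := rfl
  rw [hc]
  set f := Matrix.vecCons i g with hf
  rw [Fin.prod_univ_castSucc]
  congr 1
  · apply Finset.prod_congr rfl
    intro t _
    congr 1
    rw [Fin.coeSucc_eq_succ]
  · congr 1
    rw [Fin.last_add_one]
    simp [hf]

theorem trace_pow_eq_sum_walks' {N : ℕ} (A : Matrix (Fin N) (Fin N) ℝ) (n : ℕ) [NeZero n] :
    (A ^ n).trace = ∑ f : Fin n → Fin N, ∏ j : Fin n, A (f j) (f (j+1)) := by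
  obtain ⟨m, rfl⟩ : ∃ m, n = m + 1 := ⟨n - 1, by have := NeZero.ne n; omega⟩
  exact trace_pow_eq_sum_walks A m
end Trace

open MeasureTheory ProbabilityTheory Filter

theorem even_moments_toeplitz_le_gaussian {Ω : Type*} [MeasurableSpace Ω]
    (μ : Measure Ω) [IsProbabilityMeasure μ]
    (b : ℕ → Ω → ℝ) (hmeas : ∀ i, Measurable (b i))
    (hzero : b 0 = 0)
    (hindep : iIndepFun (fun i => b (i+1)) μ)
    (hid : ∀ i j, IdentDistrib (b (i+1)) (b (j+1)) μ μ)
    (hmean : ∀ i, ∫ ω, b (i+1) ω ∂μ = 0)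
    (hvar : ∀ i, ∫ ω, (b (i+1) ω)^2 ∂μ = 1)
    (hintq : ∀ i q : ℕ, Integrable (fun ω => (b (i+1) ω)^q) μ)
    (k : ℕ) (hk : 1 ≤ k) :
    Filter.limsup (fun N : ℕ =>
      (∫ ω, Matrix.trace ((Matrix.of fun i j : Fin N =>
          b (Nat.dist (i : ℕ) (j : ℕ)) ω) ^ (2*k)) ∂μ) / (N:ℝ)^(k+1)) atTop
      ≤ (Nat.doubleFactorial (2*k - 1) : ℝ) := by
  classical
  haveI : NeZero (2*k) := ⟨by omega⟩
  set n := 2*k with hndef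
  -- basic moment facts
  set mo : ℕ → ℝ := fun m => ∫ ω, (b 1 ω)^m ∂μ with hmo
  have moa : ∀ d : ℕ, d ≠ 0 → ∀ m : ℕ, (∫ ω, (b d ω)^m ∂μ) = mo m := by
    intro d hd m
    obtain ⟨e, rfl⟩ : ∃ e, d = e + 1 := ⟨d-1, by omega⟩
    have h1 : IdentDistrib (fun ω => (b (e+1) ω)^m) (fun ω => (b (0+1) ω)^m) μ μ :=
      (hid e 0).comp (measurable_id.pow_const m)
    have := h1.integral_eq
    simpa using this
  have mo1 : mo 1 = 0 := by
    have := hmean 0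
    simp only [hmo]
    simpa using this
  have mo2 : mo 2 = 1 := by
    have := hvar 0
    simp only [hmo]
    simpa using this
  set cmax : ℝ := 1 + ∑ m ∈ Finset.range (n+1), |mo m| with hcmax
  have habs : (0:ℝ) ≤ ∑ m ∈ Finset.range (n+1), |mo m| :=
    Finset.sum_nonneg (fun m _ => abs_nonneg (mo m))
  have hcmax1 : 1 ≤ cmax := by rw [hcmax]; linarith
  have hcmax0 : 0 ≤ cmax := by linarith
  have hmole : ∀ m, m ≤ n → |mo m| ≤ cmax := by
    intro m hm
    rw [hcmax]
    have h1 : |mo m| ≤ ∑ m' ∈ Finset.range (n+1), |mo m'| :=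
      Finset.single_le_sum (f := fun m' => |mo m'|) (fun i _ => abs_nonneg _)
        (Finset.mem_range.mpr (by omega))
    linarith
  set D : ℝ := (((n-1)‼ : ℕ) : ℝ) with hD
  set K : ℝ := (((2*n+1)^n * 3^(k-1) : ℕ) : ℝ) * ((n:ℝ) + cmax^n) with hK
  have hKpos : 0 ≤ K := by
    rw [hK]
    have h1 : (0:ℝ) ≤ cmax^n := pow_nonneg hcmax0 n
    positivity
  -- the per-N estimate
  have key : ∀ N : ℕ, 1 ≤ N →
      (∫ ω, Matrix.trace ((Matrix.of fun i j : Fin N =>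
          b (Nat.dist (i : ℕ) (j : ℕ)) ω) ^ n) ∂μ) ≤ D * (N:ℝ)^(k+1) + K * (N:ℝ)^k := by
    intro N hN
    set Tf : (Fin n → Fin N) → Ω → ℝ := fun f ω => ∏ j, b (dst f j) ω with hTf
    set Ef : (Fin n → Fin N) → ℝ := fun f => ∫ ω, Tf f ω ∂μ with hEf
    have hTint : ∀ f, Integrable (Tf f) μ := by
      intro f
      by_cases hz : ∃ j, dst f j = 0
      · have : Tf f = 0 := walk_zero hzero f hz
        rw [this]
        exact integrable_zero _ _ _
      · push_neg at hz
        exact (walk_factor hmeas hindep hintq f hz).1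
    have hEzero : ∀ f, (∃ j, dst f j = 0) → Ef f = 0 := by
      intro f hzf
      have h1 : Tf f = 0 := walk_zero hzero f hzf
      rw [hEf]
      simp only [h1]
      simp
    have hEfact : ∀ f, (∀ j, dst f j ≠ 0) →
        Ef f = ∏ d ∈ Finset.univ.image (dst f), mo (mult f d) := by
      intro f hzf
      rw [hEf]
      simp only
      rw [hTf]
      simp only
      rw [(walk_factor hmeas hindep hintq f hzf).2]
      apply Finset.prod_congr rfl
      intro d hd
      obtain ⟨j, -, rfl⟩ := Finset.mem_image.mp hd
      exact moa _ (hzf j) _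
    have hEone : ∀ f, Pairy f → Ef f = 1 := by
      intro f hP
      rw [hEfact f (fun j => (hP j).1)]
      apply Finset.prod_eq_one
      intro d hd
      obtain ⟨j, -, rfl⟩ := Finset.mem_image.mp hd
      rw [(hP j).2, mo2]
    have hEbnd : ∀ f, (∀ j, dst f j ≠ 0) → |Ef f| ≤ cmax ^ n := by
      intro f hzf
      rw [hEfact f hzf]
      rw [Finset.abs_prod]
      calc ∏ d ∈ Finset.univ.image (dst f), |mo (mult f d)|
          ≤ ∏ d ∈ Finset.univ.image (dst f), cmax := by
            apply Finset.prod_le_prod (fun _ _ => abs_nonneg _)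
            intro d hd
            apply hmole
            calc mult f d ≤ (Finset.univ : Finset (Fin n)).card := Finset.card_filter_le _ _
              _ = n := by simp
        _ = cmax ^ (Finset.univ.image (dst f)).card := Finset.prod_const _
        _ ≤ cmax ^ n := by
            apply pow_le_pow_right₀ hcmax1
            calc (Finset.univ.image (dst f)).card ≤ (Finset.univ : Finset (Fin n)).card :=
                Finset.card_image_le
              _ = n := by simp
    have hEm1 : ∀ f, (∀ j, dst f j ≠ 0) → (∃ j, mult f (dst f j) = 1) → Ef f = 0 := by
      rintro f hzf ⟨j, hj⟩
      rw [hEfact f hzf]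
      apply Finset.prod_eq_zero (Finset.mem_image_of_mem _ (Finset.mem_univ j))
      rw [hj]
      simpa using mo1
    -- trace identity
    have hsum : (∫ ω, Matrix.trace ((Matrix.of fun i j : Fin N =>
        b (Nat.dist (i : ℕ) (j : ℕ)) ω) ^ n) ∂μ) = ∑ f : Fin n → Fin N, Ef f := by
      have htr : (fun ω => Matrix.trace ((Matrix.of fun i j : Fin N =>
          b (Nat.dist (i : ℕ) (j : ℕ)) ω) ^ n)) = fun ω => ∑ f : Fin n → Fin N, Tf f ω := by
        funext ω
        rw [trace_pow_eq_sum_walks' (Matrix.of fun i j : Fin N =>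
          b (Nat.dist (i : ℕ) (j : ℕ)) ω) n]
        rfl
      rw [htr]
      exact integral_finset_sum Finset.univ (fun f _ => hTint f)
    rw [hsum]
    -- decompose the sum
    rw [← Finset.sum_filter_add_sum_filter_not Finset.univ (Pairy (N := N) (n := n)) Ef]
    -- Pairy part
    have h1 : ∑ f ∈ Finset.univ.filter (Pairy (N := N) (n := n)), Ef f
        = ((Finset.univ.filter (Pairy (N := N) (n := n))).card : ℝ) := by
      rw [Finset.sum_congr rfl (fun f hf => hEone f (Finset.mem_filter.mp hf).2)]
      rw [Finset.sum_const, nsmul_eq_mul, mul_one]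
    have h2 : (Finset.univ.filter (Pairy (N := N) (n := n))).card
        = ((Finset.univ : Finset (Fin n → Fin N)).filter (fun f => Pairy f ∧ OppSgn f)).card
          + ((Finset.univ : Finset (Fin n → Fin N)).filter
              (fun f => Pairy f ∧ ¬ OppSgn f)).card := by
      have h3 := Finset.card_filter_add_card_filter_not
        (s := Finset.univ.filter (Pairy (N := N) (n := n))) (p := OppSgn (N := N) (n := n))
      rw [Finset.filter_filter, Finset.filter_filter] at h3
      exact h3.symm
    -- non-Pairy part
    set G1 : Finset (Fin n → Fin N) := Finset.univ.filter
      (fun f => Goody f ∧ ∃ j, 3 ≤ mult f (dst f j)) with hG1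
    have h4 : ∑ f ∈ Finset.univ.filter (fun f => ¬ Pairy f), Ef f
        ≤ cmax^n * (G1.card : ℝ) := by
      have hsub : G1 ⊆ Finset.univ.filter (fun f => ¬ Pairy f) := by
        intro f hf
        rw [hG1, Finset.mem_filter] at hf
        obtain ⟨-, hG, j₀, h3f⟩ := hf
        rw [Finset.mem_filter]
        refine ⟨Finset.mem_univ _, fun hP => ?_⟩
        have := (hP j₀).2
        omega
      have hvanish : ∀ f ∈ Finset.univ.filter (fun f => ¬ Pairy f), f ∉ G1 → |Ef f| = 0 := by
        intro f hf hfG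
        rw [Finset.mem_filter] at hf
        have hnP := hf.2
        by_cases hz : ∃ j, dst f j = 0
        · rw [hEzero f hz, abs_zero]
        · push_neg at hz
          by_cases hG : Goody f
          · exfalso
            apply hfG
            rw [hG1, Finset.mem_filter]
            refine ⟨Finset.mem_univ _, hG, ?_⟩
            by_contra hcon
            push_neg at hcon
            apply hnP
            intro j
            have ha := (hG j).2
            have hb := hcon j
            exact ⟨hz j, by omega⟩
          · rw [Goody] at hG
            push_neg at hG
            obtain ⟨j, hj⟩ := hG
            have hj2 := hj (hz j)
            have hj3 : 1 ≤ mult f (dst f j) := by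
              rw [mult]
              apply Finset.card_pos.mpr
              exact ⟨j, by simp⟩
            rw [hEm1 f hz ⟨j, by omega⟩, abs_zero]
      calc ∑ f ∈ Finset.univ.filter (fun f => ¬ Pairy f), Ef f
          ≤ ∑ f ∈ Finset.univ.filter (fun f => ¬ Pairy f), |Ef f| :=
            Finset.sum_le_sum (fun f _ => le_abs_self _)
        _ = ∑ f ∈ G1, |Ef f| := (Finset.sum_subset hsub hvanish).symm
        _ ≤ ∑ f ∈ G1, cmax^n := by
            apply Finset.sum_le_sum
            intro f hf
            rw [hG1, Finset.mem_filter] at hf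
            exact hEbnd f (fun j => (hf.2.1 j).1)
        _ = cmax^n * (G1.card : ℝ) := by
            rw [Finset.sum_const, nsmul_eq_mul]
            ring
    -- counting estimates (in ℕ)
    have hNpow : N * (2*N+1)^(k-1) ≤ 3^(k-1) * N^k := by
      calc N * (2*N+1)^(k-1) ≤ N * (3*N)^(k-1) :=
            Nat.mul_le_mul_left _ (Nat.pow_le_pow_left (by omega) _)
        _ = 3^(k-1) * (N * N^(k-1)) := by rw [mul_pow]; ring
        _ = 3^(k-1) * N^k := by
            congr 1
            rw [← _root_.pow_succ']
            congr 1
            omega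
    have hcount1 : ((Finset.univ : Finset (Fin n → Fin N)).filter
        (fun f => Pairy f ∧ OppSgn f)).card ≤ (n-1)‼ * (N * N^k) := by
      refine le_trans (countA hndef) ?_
      apply Nat.mul_le_mul_right
      have := card_matchSet_le (Finset.range n)
      rwa [Finset.card_range] at this
    have hcount2 : ((Finset.univ : Finset (Fin n → Fin N)).filter
        (fun f => Pairy f ∧ ¬ OppSgn f)).card ≤ (2*n+1)^n * (n * (3^(k-1) * N^k)) := by
      refine le_trans (countC hndef hk) ?_
      exact Nat.mul_le_mul_left _ (Nat.mul_le_mul_left _ hNpow)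
    have hcount3 : G1.card ≤ (2*n+1)^n * (3^(k-1) * N^k) := by
      refine le_trans (countB hndef) ?_
      exact Nat.mul_le_mul_left _ hNpow
    -- put it together over ℝ
    have hc1 : (((Finset.univ : Finset (Fin n → Fin N)).filter
        (fun f => Pairy f ∧ OppSgn f)).card : ℝ) ≤ D * (N:ℝ)^(k+1) := by
      calc (((Finset.univ : Finset (Fin n → Fin N)).filter
          (fun f => Pairy f ∧ OppSgn f)).card : ℝ) ≤ (((n-1)‼ * (N * N^k) : ℕ) : ℝ) :=
            Nat.cast_le.mpr hcount1
        _ = D * (N:ℝ)^(k+1) := by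
            rw [hD]
            push_cast
            ring
    have hc2 : (((Finset.univ : Finset (Fin n → Fin N)).filter
        (fun f => Pairy f ∧ ¬ OppSgn f)).card : ℝ)
        ≤ (((2*n+1)^n * 3^(k-1) : ℕ) : ℝ) * (n:ℝ) * (N:ℝ)^k := by
      calc (((Finset.univ : Finset (Fin n → Fin N)).filter
          (fun f => Pairy f ∧ ¬ OppSgn f)).card : ℝ)
          ≤ (((2*n+1)^n * (n * (3^(k-1) * N^k)) : ℕ) : ℝ) := Nat.cast_le.mpr hcount2
        _ = (((2*n+1)^n * 3^(k-1) : ℕ) : ℝ) * (n:ℝ) * (N:ℝ)^k := by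
            push_cast
            ring
    have hc3 : (G1.card : ℝ) ≤ (((2*n+1)^n * 3^(k-1) : ℕ) : ℝ) * (N:ℝ)^k := by
      calc (G1.card : ℝ) ≤ (((2*n+1)^n * (3^(k-1) * N^k) : ℕ) : ℝ) := Nat.cast_le.mpr hcount3
        _ = (((2*n+1)^n * 3^(k-1) : ℕ) : ℝ) * (N:ℝ)^k := by
            push_cast
            ring
    rw [h1, h2]
    push_cast
    have hcm : (0:ℝ) ≤ cmax ^ n := pow_nonneg hcmax0 n
    rw [hK]
    push_cast
    push_cast at hc1 hc2 hc3
    nlinarith [h4, hc1, hc2, hc3, mul_le_mul_of_nonneg_left hc3 hcm]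
  -- nonnegativity of the trace integral
  have hnonneg : ∀ N : ℕ, 0 ≤ (∫ ω, Matrix.trace ((Matrix.of fun i j : Fin N =>
      b (Nat.dist (i : ℕ) (j : ℕ)) ω) ^ n) ∂μ) := by
    intro N
    apply integral_nonneg
    intro ω
    set B : Matrix (Fin N) (Fin N) ℝ :=
      (Matrix.of fun i j : Fin N => b (Nat.dist (i : ℕ) (j : ℕ)) ω) ^ k with hB
    have hsym : B.transpose = B := by
      rw [hB, Matrix.transpose_pow]
      congr 1
      ext i j
      simp only [Matrix.transpose_apply, Matrix.of_apply]
      rw [Nat.dist_comm]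
    have hpow : (Matrix.of fun i j : Fin N =>
        b (Nat.dist (i : ℕ) (j : ℕ)) ω) ^ n = B * B := by
      rw [hB, ← pow_add]
      congr 1
      omega
    show (0:ℝ) ≤ Matrix.trace ((Matrix.of fun i j : Fin N =>
        b (Nat.dist (i : ℕ) (j : ℕ)) ω) ^ n)
    rw [hpow, Matrix.trace]
    have hdiag : ∀ i, (B * B).diag i = ∑ j, B i j * B j i := by
      intro i
      rw [Matrix.diag]
      exact Matrix.mul_apply
    rw [Finset.sum_congr rfl (fun i _ => hdiag i)]
    apply Finset.sum_nonneg
    intro i _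
    apply Finset.sum_nonneg
    intro j _
    have hji : B j i = B i j := by
      conv_lhs => rw [← hsym]
      rw [Matrix.transpose_apply]
    rw [hji]
    exact mul_self_nonneg _
  -- limsup argument
  have hL : ∀ N : ℕ, 1 ≤ N →
      (∫ ω, Matrix.trace ((Matrix.of fun i j : Fin N =>
          b (Nat.dist (i : ℕ) (j : ℕ)) ω) ^ n) ∂μ) / (N:ℝ)^(k+1)
        ≤ D + K * (1/(N:ℝ)) := by
    intro N hN
    have hNR : (1:ℝ) ≤ (N:ℝ) := by exact_mod_cast hN
    have hNpos : (0:ℝ) < (N:ℝ)^(k+1) := by positivity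
    rw [div_le_iff₀ hNpos]
    calc (∫ ω, Matrix.trace ((Matrix.of fun i j : Fin N =>
          b (Nat.dist (i : ℕ) (j : ℕ)) ω) ^ n) ∂μ)
        ≤ D * (N:ℝ)^(k+1) + K * (N:ℝ)^k := key N hN
      _ = (D + K * (1/(N:ℝ))) * (N:ℝ)^(k+1) := by
          have hNne : (N:ℝ) ≠ 0 := by linarith
          field_simp
          ring
  have hLnonneg : ∀ N : ℕ,
      0 ≤ (∫ ω, Matrix.trace ((Matrix.of fun i j : Fin N =>
          b (Nat.dist (i : ℕ) (j : ℕ)) ω) ^ n) ∂μ) / (N:ℝ)^(k+1) := by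
    intro N
    apply div_nonneg (hnonneg N)
    positivity
  have hRtend : Tendsto (fun N : ℕ => D + K * (1/(N:ℝ))) atTop (nhds D) := by
    have h0 : Tendsto (fun N : ℕ => 1/(N:ℝ)) atTop (nhds 0) :=
      tendsto_one_div_atTop_nhds_zero_nat
    have h1 : Tendsto (fun N : ℕ => D + K * (1/(N:ℝ))) atTop (nhds (D + K * 0)) :=
      (tendsto_const_nhds (x := D) (f := atTop)).add (h0.const_mul K)
    simpa using h1
  have hlim : Filter.limsup (fun N : ℕ => D + K * (1/(N:ℝ))) atTop = D :=
    hRtend.limsup_eq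
  have hfinal : Filter.limsup (fun N : ℕ =>
      (∫ ω, Matrix.trace ((Matrix.of fun i j : Fin N =>
          b (Nat.dist (i : ℕ) (j : ℕ)) ω) ^ n) ∂μ) / (N:ℝ)^(k+1)) atTop ≤ D := by
    rw [← hlim]
    apply Filter.limsup_le_limsup
    · filter_upwards [Filter.eventually_ge_atTop 1] with N hN
      exact hL N hN
    · apply Filter.IsBoundedUnder.isCoboundedUnder_le
      refine ⟨0, ?_⟩
      apply Filter.eventually_map.mpr
      exact Filter.Eventually.of_forall (fun N => hLnonneg N)
    · refine ⟨D + K, ?_⟩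
      apply Filter.eventually_map.mpr
      apply Filter.Eventually.of_forall
      intro N
      have h1 : (0:ℝ) ≤ 1/(N:ℝ) := by positivity
      have h2 : 1/(N:ℝ) ≤ 1 := by
        rcases Nat.eq_zero_or_pos N with rfl | hNp
        · simp
        · rw [div_le_one (by exact_mod_cast hNp)]
          exact_mod_cast hNp
      nlinarith
  exact hfinal
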